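/- arXiv:1108.0273 — 5 statements merged into one kernel-verified Lean document; each statement's English description precedes it below -/
import Mathlib

section
/- For any composition I = (I_1, ..., I_r) of a positive integer N (i.e. integers I_j ≥ 1 with I_1 + ... + I_r = N), define n_I = ∏_{j=1}^{r} C(∑_{k≤j} I_k - 1, I_j - 1) · C(∑_{k≥j} I_k - 1, I_j - 1), where C denotes binomial coefficients. Then n_I = (N-1)!² · ∏_{j=1}^{r} 1/(I_j - 1)!² · ∏_{j=1}^{r-1} 1/((∑_{k=1}^{j} I_k)(∑_{k=j+1}^{r} I_k)). -/
open Finset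

/-- The coefficient `n_I` associated to a composition `I` (given by its first `r`
entries of the function `I : ℕ → ℕ`). -/
def nC (r : ℕ) (I : ℕ → ℕ) : ℚ :=
  ∏ j ∈ Finset.range r,
    ((((∑ k ∈ Finset.range (j + 1), I k) - 1).choose (I j - 1) : ℚ) *
      (((∑ k ∈ Finset.Ico j r, I k) - 1).choose (I j - 1) : ℚ))

lemma prefix_prod (I : ℕ → ℕ) : ∀ r, (∀ j < r, 1 ≤ I j) →
    ∏ j ∈ range r, (((∑ k ∈ range (j+1), I k) - 1).choose (I j - 1) : ℚ)
    = (((∑ k ∈ range r, I k) - 1).factorial : ℚ)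
      * (∏ j ∈ range r, (1 / ((I j - 1).factorial : ℚ)))
      * ∏ j ∈ Ico 1 r, (1 / ((∑ k ∈ range j, I k : ℕ) : ℚ)) := by
  intro r
  induction r with
  | zero => simp
  | succ r ih =>
    intro hI
    rcases Nat.eq_zero_or_pos r with hr | hr
    · subst hr
      simp [Nat.choose_self, Nat.factorial_ne_zero]
    · have hIr : 1 ≤ I r := hI r (Nat.lt_succ_self r)
      have hS : 1 ≤ ∑ k ∈ range r, I k := by
        calc 1 ≤ I 0 := hI 0 (by omega)
        _ ≤ ∑ k ∈ range r, I k := Finset.single_le_sum (f := I) (by intros; positivity) (mem_range.mpr hr)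
      have hsub : (∑ k ∈ range (r+1), I k) - 1 - (I r - 1) = ∑ k ∈ range r, I k := by
        rw [Finset.sum_range_succ]; omega
      have hle : I r - 1 ≤ (∑ k ∈ range (r+1), I k) - 1 := by
        rw [Finset.sum_range_succ]; omega
      rw [Finset.prod_range_succ, ih (fun j hj => hI j (by omega)),
        Finset.prod_range_succ (f := fun j => 1 / ((I j - 1).factorial : ℚ)),
        Finset.prod_Ico_succ_top hr, Nat.cast_choose ℚ hle, hsub]
      have hfac : ((∑ k ∈ range r, I k).factorial : ℚ)
          = ((∑ k ∈ range r, I k : ℕ) : ℚ) * (((∑ k ∈ range r, I k) - 1).factorial : ℚ) := by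
        rw [← Nat.cast_mul, Nat.mul_factorial_pred (Nat.one_le_iff_ne_zero.mp hS)]
      rw [hfac]
      have h1 : (((∑ k ∈ range r, I k) - 1).factorial : ℚ) ≠ 0 := Nat.cast_ne_zero.mpr (Nat.factorial_ne_zero _)
      have h2 : (((I r) - 1).factorial : ℚ) ≠ 0 := Nat.cast_ne_zero.mpr (Nat.factorial_ne_zero _)
      have h4 : ((∑ k ∈ range r, I k : ℕ) : ℚ) ≠ 0 := by positivity
      set A := (((∑ k ∈ range r, I k) - 1).factorial : ℚ)
      set B := (((∑ k ∈ range (r+1), I k) - 1).factorial : ℚ)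
      set C := (((I r) - 1).factorial : ℚ)
      set s := ((∑ k ∈ range r, I k : ℕ) : ℚ)
      set P := ∏ j ∈ range r, (1 / ((I j - 1).factorial : ℚ))
      set Q := ∏ j ∈ Ico 1 r, (1 / ((∑ k ∈ range j, I k : ℕ) : ℚ))
      field_simp

lemma suffix_prod : ∀ (r : ℕ) (I : ℕ → ℕ), (∀ j < r, 1 ≤ I j) →
    ∏ j ∈ range r, (((∑ k ∈ Ico j r, I k) - 1).choose (I j - 1) : ℚ)
    = (((∑ k ∈ range r, I k) - 1).factorial : ℚ)
      * (∏ j ∈ range r, (1 / ((I j - 1).factorial : ℚ)))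
      * ∏ j ∈ Ico 1 r, (1 / ((∑ k ∈ Ico j r, I k : ℕ) : ℚ)) := by
  intro r
  induction r with
  | zero => simp
  | succ r ih =>
    intro I hI
    have hshift : ∀ j, ∑ k ∈ Ico (j+1) (r+1), I k = ∑ k ∈ Ico j r, I (k+1) := by
      intro j
      rw [Finset.sum_Ico_eq_sum_range, Finset.sum_Ico_eq_sum_range]
      simp only [Nat.succ_sub_succ]
      exact Finset.sum_congr rfl (fun i _ => by ring_nf)
    have hM : ∑ k ∈ Ico 1 (r+1), I k = ∑ k ∈ range r, I (k+1) := by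
      rw [hshift 0, Finset.sum_Ico_eq_sum_range]
      simp
    rcases Nat.eq_zero_or_pos r with hr | hr
    · subst hr
      simp [Nat.choose_self]
      exact (mul_inv_cancel₀ (Nat.cast_ne_zero.mpr (Nat.factorial_ne_zero _))).symm
    · have hI' : ∀ j < r, 1 ≤ I (j+1) := fun j hj => hI (j+1) (by omega)
      have ihI := ih (fun k => I (k+1)) hI'
      rw [Finset.prod_range_succ']
      have e1 : ∀ j, (((∑ k ∈ Ico (j+1) (r+1), I k) - 1).choose (I (j+1) - 1) : ℚ)
          = (((∑ k ∈ Ico j r, I (k+1)) - 1).choose (I (j+1) - 1) : ℚ) := by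
        intro j; rw [hshift]
      simp only [e1]
      rw [ihI]
      have hI0 : 1 ≤ I 0 := hI 0 (by omega)
      have hM1 : 1 ≤ ∑ k ∈ range r, I (k+1) := by
        calc 1 ≤ I 1 := hI 1 (by omega)
        _ ≤ ∑ k ∈ range r, I (k+1) := Finset.single_le_sum (f := fun k => I (k+1)) (by intros; positivity) (mem_range.mpr hr)
      have hN : ∑ k ∈ Ico 0 (r+1), I k = I 0 + ∑ k ∈ range r, I (k+1) := by
        rw [← Finset.range_eq_Ico, Finset.sum_range_succ']
        omega
      have hsub : (∑ k ∈ Ico 0 (r+1), I k) - 1 - (I 0 - 1) = ∑ k ∈ range r, I (k+1) := by omega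
      have hle : I 0 - 1 ≤ (∑ k ∈ Ico 0 (r+1), I k) - 1 := by omega
      rw [Nat.cast_choose ℚ hle, hsub]
      have hNr : ∑ k ∈ range (r+1), I k = I 0 + ∑ k ∈ range r, I (k+1) := by
        rw [Finset.sum_range_succ']; omega
      rw [hNr, Finset.prod_range_succ' (f := fun j => 1 / ((I j - 1).factorial : ℚ))]
      have htail : ∏ j ∈ Ico 2 (r+1), (1 / ((∑ k ∈ Ico j (r+1), I k : ℕ) : ℚ))
          = ∏ j ∈ Ico 1 r, (1 / ((∑ k ∈ Ico j r, I (k+1) : ℕ) : ℚ)) := by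
        rw [Finset.prod_Ico_eq_prod_range, Finset.prod_Ico_eq_prod_range]
        have h2 : r + 1 - 2 = r - 1 := by omega
        rw [h2]
        refine Finset.prod_congr rfl fun i _ => ?_
        have := hshift (1 + i)
        have e : 2 + i = 1 + i + 1 := by omega
        rw [e, this]
      have hsplit : ∏ j ∈ Ico 1 (r+1), (1 / ((∑ k ∈ Ico j (r+1), I k : ℕ) : ℚ))
          = (1 / ((∑ k ∈ range r, I (k+1) : ℕ) : ℚ))
            * ∏ j ∈ Ico 1 r, (1 / ((∑ k ∈ Ico j r, I (k+1) : ℕ) : ℚ)) := by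
        rw [Finset.prod_eq_prod_Ico_succ_bot (by omega : 1 < r + 1), htail, hM]
      rw [hsplit]
      -- algebra
      have hfac : ((∑ k ∈ range r, I (k+1)).factorial : ℚ)
          = ((∑ k ∈ range r, I (k+1) : ℕ) : ℚ) * (((∑ k ∈ range r, I (k+1)) - 1).factorial : ℚ) := by
        rw [← Nat.cast_mul, Nat.mul_factorial_pred (Nat.one_le_iff_ne_zero.mp hM1)]
      rw [hfac, hN]
      have h1 : (((∑ k ∈ range r, I (k+1)) - 1).factorial : ℚ) ≠ 0 := Nat.cast_ne_zero.mpr (Nat.factorial_ne_zero _)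
      have h2 : (((I 0) - 1).factorial : ℚ) ≠ 0 := Nat.cast_ne_zero.mpr (Nat.factorial_ne_zero _)
      have h4 : ((∑ k ∈ range r, I (k+1) : ℕ) : ℚ) ≠ 0 := by positivity
      set A := (((∑ k ∈ range r, I (k+1)) - 1).factorial : ℚ)
      set B := (((I 0 + ∑ k ∈ range r, I (k+1)) - 1).factorial : ℚ)
      set C := (((I 0) - 1).factorial : ℚ)
      set s := ((∑ k ∈ range r, I (k+1) : ℕ) : ℚ)
      set P := ∏ j ∈ range r, (1 / ((I (j+1) - 1).factorial : ℚ))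
      set Q := ∏ j ∈ Ico 1 r, (1 / ((∑ k ∈ Ico j r, I (k+1) : ℕ) : ℚ))
      field_simp

/-- the closed formula for `n_I` with reduced fractions. -/
theorem nC_eq (r N : ℕ) (hr : 1 ≤ r) (I : ℕ → ℕ) (hI : ∀ j < r, 1 ≤ I j)
    (hN : N = ∑ j ∈ Finset.range r, I j) :
    nC r I =
      (((N - 1).factorial : ℚ)) ^ 2 *
        (∏ j ∈ Finset.range r, (1 / (((I j - 1).factorial : ℚ)) ^ 2)) *
        ∏ j ∈ Finset.range (r - 1),
          (1 / (((∑ k ∈ Finset.range (j + 1), I k : ℕ) : ℚ) *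
            ((∑ k ∈ Finset.Ico (j + 1) r, I k : ℕ) : ℚ))) := by
  unfold nC
  rw [Finset.prod_mul_distrib, prefix_prod I r hI, suffix_prod r I hI, ← hN]
  have e2 : ∏ j ∈ range r, (1 / (((I j - 1).factorial : ℚ)) ^ 2)
      = (∏ j ∈ range r, (1 / ((I j - 1).factorial : ℚ))) ^ 2 := by
    rw [← Finset.prod_pow]
    exact Finset.prod_congr rfl fun j _ => by rw [div_pow, one_pow]
  have e3 : ∏ j ∈ Finset.range (r - 1),
        (1 / (((∑ k ∈ Finset.range (j + 1), I k : ℕ) : ℚ) *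
          ((∑ k ∈ Finset.Ico (j + 1) r, I k : ℕ) : ℚ)))
      = (∏ j ∈ Ico 1 r, (1 / ((∑ k ∈ range j, I k : ℕ) : ℚ)))
        * ∏ j ∈ Ico 1 r, (1 / ((∑ k ∈ Ico j r, I k : ℕ) : ℚ)) := by
    rw [Finset.prod_Ico_eq_prod_range, Finset.prod_Ico_eq_prod_range, ← Finset.prod_mul_distrib]
    refine Finset.prod_congr rfl fun j _ => ?_
    rw [div_mul_div_comm, one_mul]
    norm_num [add_comm 1 j]
  rw [e2, e3]
  ring
end

section
/- For every s > 1 and positive integers K_1, ..., K_s, and for indeterminates (or arbitrary rational values) X and Y, the following identity holds: ∑_{A ⊆ [s-1]} (-1)^{|A|} (K_1+...+K_{a_1})(K_{a_1+1}+...+K_{a_2}) ··· (K_{a_ℓ+1}+...+K_s + X) · [∏_{a∈A} (K_a + K_{a+1} + Y·χ(a = s-1))] / [∏_{a∈A} (K_1+...+K_a)(K_{a+1}+...+K_s)] = -(X(K_1+...+K_{s-1}) + Y(K_s + X))/(K_2+...+K_s), where A = {a_1 < a_2 < ... < a_ℓ} runs over all subsets of {1,...,s-1} (including the empty set), and χ(S)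 = 1 if S is true and 0 otherwise. -/
open Finset

/-- For a finite set `A` of cut positions (0-indexed) and a position `e`, the start of
the block ending at `e`: one more than the largest cut below `e`, or `0` if none. -/
def blockStart (A : Finset ℕ) (e : ℕ) : ℕ :=
  if h : (A.filter (· < e)).Nonempty then (A.filter (· < e)).max' h + 1 else 0

def mergeK (K : ℕ → ℕ) (m : ℕ) : ℕ → ℕ := fun j => if j = m then K m + K (m + 1) else K j

lemma mergeK_lt {K : ℕ → ℕ} {m j : ℕ} (h : j ≠ m) : mergeK K m j = K j := by
  simp [mergeK, h]

lemma mergeK_self {K : ℕ → ℕ} {m : ℕ} : mergeK K m m = K m + K (m + 1) := by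
  simp [mergeK]

lemma blockStart_congr (A : Finset ℕ) {e e' : ℕ}
    (h : A.filter (· < e) = A.filter (· < e')) : blockStart A e = blockStart A e' := by
  simp only [blockStart, h]

lemma blockStart_of_lt {A : Finset ℕ} {m : ℕ} (hA : ∀ a ∈ A, a < m) {e e' : ℕ}
    (he : m ≤ e) (he' : m ≤ e') : blockStart A e = blockStart A e' := by
  apply blockStart_congr
  rw [filter_true_of_mem fun a ha => show a < e from lt_of_lt_of_le (hA a ha) he,
    filter_true_of_mem fun a ha => show a < e' from lt_of_lt_of_le (hA a ha) he']

lemma blockStart_le_of {A : Finset ℕ} {m : ℕ} (hA : ∀ a ∈ A, a < m) (e : ℕ) :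
    blockStart A e ≤ m := by
  unfold blockStart
  split
  · next h =>
    have hm := (A.filter (· < e)).max'_mem h
    have := hA _ (mem_filter.mp hm).1
    omega
  · omega

lemma blockStart_insert_of_le {A : Finset ℕ} {m e : ℕ} (h : e ≤ m) :
    blockStart (insert m A) e = blockStart A e := by
  have key : (insert m A).filter (· < e) = A.filter (· < e) := by
    rw [filter_insert, if_neg (show ¬ (m < e) by omega)]
  simp only [blockStart, key]

lemma blockStart_insert_top {A : Finset ℕ} {m : ℕ} (hA : ∀ a ∈ A, a < m) :
    blockStart (insert m A) (m + 1) = m + 1 := by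
  have hf : (insert m A).filter (· < m + 1) = insert m A := by
    apply filter_true_of_mem
    intro a ha
    simp only [mem_insert] at ha
    rcases ha with rfl | ha
    · show a < a + 1; omega
    · show a < m + 1; exact lt_trans (hA a ha) (by omega)
  have hne : ((insert m A).filter (· < m + 1)).Nonempty := by
    rw [hf]; exact insert_nonempty _ _
  rw [blockStart, dif_pos hne]
  congr 1
  apply le_antisymm
  · apply max'_le
    intro y hy
    rw [hf, mem_insert] at hy
    rcases hy with rfl | hy
    · exact le_refl _
    · exact le_of_lt (hA y hy)
  · exact le_max' _ _ (by rw [hf]; exact mem_insert_self _ _)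

lemma mergeK_sum_range {K : ℕ → ℕ} {m a : ℕ} (h : a ≤ m) :
    ∑ k ∈ range a, mergeK K m k = ∑ k ∈ range a, K k :=
  sum_congr rfl fun k hk => mergeK_lt (by have := mem_range.mp hk; omega)

lemma mergeK_sum_Ico_low {K : ℕ → ℕ} {m b e : ℕ} (he : e ≤ m) :
    ∑ k ∈ Ico b e, mergeK K m k = ∑ k ∈ Ico b e, K k :=
  sum_congr rfl fun k hk => mergeK_lt (by have := (mem_Ico.mp hk).2; omega)

lemma mergeK_sum_Ico_top {K : ℕ → ℕ} {m b : ℕ} (hb : b ≤ m) :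
    ∑ k ∈ Ico b (m + 1), mergeK K m k = ∑ k ∈ Ico b (m + 2), K k := by
  rw [sum_Ico_succ_top hb, sum_Ico_succ_top (by omega : b ≤ m + 1),
    sum_Ico_succ_top hb, mergeK_self, mergeK_sum_Ico_low (le_refl m)]
  ring

def krSum (s : ℕ) (K : ℕ → ℕ) (X Y : ℚ) : ℚ :=
  ∑ A ∈ (Finset.range (s - 1)).powerset,
      (-1 : ℚ) ^ A.card *
        (∏ e ∈ insert (s - 1) A,
          (if e = s - 1 then ((∑ k ∈ Finset.Ico (blockStart A e) s, K k : ℕ) : ℚ) + X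
            else ((∑ k ∈ Finset.Ico (blockStart A e) (e + 1), K k : ℕ) : ℚ))) *
        (∏ a ∈ A,
          (((K a + K (a + 1) : ℕ) : ℚ) + (if a = s - 2 then Y else 0)) /
            (((∑ k ∈ Finset.range (a + 1), K k : ℕ) : ℚ) *
              ((∑ k ∈ Finset.Ico (a + 1) s, K k : ℕ) : ℚ)))

lemma krSum_step (n : ℕ) (K : ℕ → ℕ) (X Y : ℚ) :
    krSum (n + 3) K X Y
      = krSum (n + 2) (mergeK K (n + 1)) X (-(K (n + 2) : ℚ))
        - ((K (n + 1) : ℚ) + (K (n + 2) : ℚ) + Y) * ((K (n + 2) : ℚ) + X)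
          / (((∑ k ∈ range (n + 2), K k : ℕ) : ℚ) * (K (n + 2) : ℚ))
          * krSum (n + 2) (mergeK K (n + 1)) (-(K (n + 2) : ℚ)) (-(K (n + 2) : ℚ)) := by
  unfold krSum
  simp only [show n + 3 - 1 = n + 2 from rfl, show n + 3 - 2 = n + 1 from rfl,
    show n + 2 - 1 = n + 1 from rfl, show n + 2 - 2 = n from rfl]
  conv_lhs => rw [show range (n + 2) = insert (n + 1) (range (n + 1)) from range_add_one]
  rw [sum_powerset_insert (by simp)]
  rw [sub_eq_add_neg, mul_sum, ← Finset.sum_neg_distrib]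
  congr 1
  · apply sum_congr rfl
    intro A hA
    simp only [mem_powerset] at hA
    have hmem : ∀ a ∈ A, a < n + 1 := fun a ha => mem_range.mp (hA ha)
    have h2 : (n + 2) ∉ A := fun h => by have := hmem _ h; omega
    have h1 : (n + 1) ∉ A := fun h => by have := hmem _ h; omega
    have hb : blockStart A (n + 1) ≤ n + 1 := blockStart_le_of hmem _
    congr 1
    · congr 1
      rw [prod_insert h2, prod_insert h1, if_pos rfl, if_pos rfl]
      congr 1
      · rw [blockStart_of_lt hmem (by omega : n + 1 ≤ n + 2) (le_refl (n + 1)),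
          mergeK_sum_Ico_top hb]
      · apply prod_congr rfl
        intro e he
        have he' : e < n + 1 := hmem _ he
        rw [if_neg (by omega), if_neg (by omega), mergeK_sum_Ico_low (by omega : e + 1 ≤ n + 1)]
    · apply prod_congr rfl
      intro a ha
      have ha' : a < n + 1 := hmem _ ha
      rw [mergeK_sum_range (by omega : a + 1 ≤ n + 1), mergeK_sum_Ico_top (by omega : a + 1 ≤ n + 1)]
      by_cases hn : a = n
      · subst hn
        rw [if_neg (by omega), if_pos rfl, mergeK_lt (by omega), mergeK_self]
        push_cast
        ring
      · rw [if_neg (by omega), if_neg hn, mergeK_lt (by omega), mergeK_lt (by omega)]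
  · apply sum_congr rfl
    intro A hA
    simp only [mem_powerset] at hA
    have hmem : ∀ a ∈ A, a < n + 1 := fun a ha => mem_range.mp (hA ha)
    have h1 : (n + 1) ∉ A := fun h => by have := hmem _ h; omega
    have h2 : (n + 2) ∉ insert (n + 1) A := by
      simp only [mem_insert]
      push_neg
      exact ⟨by omega, fun h => by have := hmem _ h; omega⟩
    have hb : blockStart A (n + 1) ≤ n + 1 := blockStart_le_of hmem _
    have hsing : ∑ k ∈ Ico (n + 2) (n + 3), K k = K (n + 2) := by
      rw [sum_Ico_succ_top (le_refl (n + 2)), Ico_self, sum_empty, zero_add]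
    have hcard : (insert (n + 1) A).card = A.card + 1 := card_insert_of_notMem h1
    -- block product on the left
    have hBL : (∏ e ∈ insert (n + 2) (insert (n + 1) A),
          (if e = n + 2 then ((∑ k ∈ Ico (blockStart (insert (n + 1) A) e) (n + 3), K k : ℕ) : ℚ) + X
            else ((∑ k ∈ Ico (blockStart (insert (n + 1) A) e) (e + 1), K k : ℕ) : ℚ)))
        = ((K (n + 2) : ℚ) + X) *
          (((∑ k ∈ Ico (blockStart A (n + 1)) (n + 2), K k : ℕ) : ℚ) *
            ∏ e ∈ A, ((∑ k ∈ Ico (blockStart A e) (e + 1), K k : ℕ) : ℚ)) := by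
      rw [prod_insert h2, prod_insert h1, if_pos rfl, if_neg (by omega)]
      congr 1
      · rw [blockStart_insert_top hmem, hsing]
      congr 1
      · rw [blockStart_insert_of_le (le_refl (n + 1))]
      · apply prod_congr rfl
        intro e he
        have he' : e < n + 1 := hmem _ he
        rw [if_neg (by omega), blockStart_insert_of_le (by omega : e ≤ n + 1)]
    -- block product on the right
    have hBR : (∏ e ∈ insert (n + 1) A,
          (if e = n + 1 then ((∑ k ∈ Ico (blockStart A e) (n + 2), mergeK K (n + 1) k : ℕ) : ℚ) + (-(K (n + 2) : ℚ))
            else ((∑ k ∈ Ico (blockStart A e) (e + 1), mergeK K (n + 1) k : ℕ) : ℚ)))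
        = ((∑ k ∈ Ico (blockStart A (n + 1)) (n + 2), K k : ℕ) : ℚ) *
            ∏ e ∈ A, ((∑ k ∈ Ico (blockStart A e) (e + 1), K k : ℕ) : ℚ) := by
      rw [prod_insert h1, if_pos rfl]
      congr 1
      · rw [mergeK_sum_Ico_top hb, sum_Ico_succ_top (by omega : blockStart A (n + 1) ≤ n + 2)]
        push_cast
        ring
      · apply prod_congr rfl
        intro e he
        have he' : e < n + 1 := hmem _ he
        rw [if_neg (by omega), mergeK_sum_Ico_low (by omega : e + 1 ≤ n + 1)]
    -- cut product on the left
    have hCL : (∏ a ∈ insert (n + 1) A,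
          (((K a + K (a + 1) : ℕ) : ℚ) + (if a = n + 1 then Y else 0)) /
            (((∑ k ∈ range (a + 1), K k : ℕ) : ℚ) * ((∑ k ∈ Ico (a + 1) (n + 3), K k : ℕ) : ℚ)))
        = (((K (n + 1) + K (n + 2) : ℕ) : ℚ) + Y) /
            (((∑ k ∈ range (n + 2), K k : ℕ) : ℚ) * ((K (n + 2) : ℕ) : ℚ)) *
          ∏ a ∈ A,
            (((K a + K (a + 1) : ℕ) : ℚ) + (if a = n + 1 then Y else 0)) /
              (((∑ k ∈ range (a + 1), K k : ℕ) : ℚ) * ((∑ k ∈ Ico (a + 1) (n + 3), K k : ℕ) : ℚ)) := by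
      rw [prod_insert h1, if_pos rfl, hsing]
    -- cut products agree on A
    have hC : (∏ a ∈ A,
          (((K a + K (a + 1) : ℕ) : ℚ) + (if a = n + 1 then Y else 0)) /
            (((∑ k ∈ range (a + 1), K k : ℕ) : ℚ) * ((∑ k ∈ Ico (a + 1) (n + 3), K k : ℕ) : ℚ)))
        = ∏ a ∈ A,
          (((mergeK K (n + 1) a + mergeK K (n + 1) (a + 1) : ℕ) : ℚ) + (if a = n then -(K (n + 2) : ℚ) else 0)) /
            (((∑ k ∈ range (a + 1), mergeK K (n + 1) k : ℕ) : ℚ) *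
              ((∑ k ∈ Ico (a + 1) (n + 2), mergeK K (n + 1) k : ℕ) : ℚ)) := by
      apply prod_congr rfl
      intro a ha
      have ha' : a < n + 1 := hmem _ ha
      rw [mergeK_sum_range (by omega : a + 1 ≤ n + 1), mergeK_sum_Ico_top (by omega : a + 1 ≤ n + 1)]
      by_cases hn : a = n
      · subst hn
        rw [if_neg (by omega), if_pos rfl, mergeK_lt (by omega), mergeK_self]
        push_cast
        ring
      · rw [if_neg (by omega), if_neg hn, mergeK_lt (by omega), mergeK_lt (by omega)]
    rw [hcard, hBL, hCL, hBR, ← hC, pow_succ]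
    push_cast
    ring

lemma sumK_pos {s : ℕ} {K : ℕ → ℕ} (hK : ∀ j < s, 1 ≤ K j) {i j : ℕ} (hij : i < j)
    (hj : j ≤ s) : 0 < ∑ k ∈ Ico i j, K k := by
  apply sum_pos
  · intro k hk
    have := (mem_Ico.mp hk).2
    exact hK k (by omega)
  · exact ⟨i, mem_Ico.mpr ⟨le_refl i, hij⟩⟩

lemma krSum_formula : ∀ (n : ℕ) (K : ℕ → ℕ), (∀ j < n + 2, 1 ≤ K j) → ∀ X Y : ℚ,
    krSum (n + 2) K X Y =
      -(X * ((∑ k ∈ range (n + 1), K k : ℕ) : ℚ) + Y * ((K (n + 1) : ℚ) + X)) /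
        ((∑ k ∈ Ico 1 (n + 2), K k : ℕ) : ℚ) := by
  intro n
  induction n with
  | zero =>
    intro K hK X Y
    have hK0 : ((K 0 : ℕ) : ℚ) ≠ 0 := by
      have : (0 : ℚ) < K 0 := by exact_mod_cast hK 0 (by omega)
      exact this.ne'
    have hK1 : ((K 1 : ℕ) : ℚ) ≠ 0 := by
      have : (0 : ℚ) < K 1 := by exact_mod_cast hK 1 (by omega)
      exact this.ne'
    show krSum 2 K X Y =
      -(X * ((∑ k ∈ range 1, K k : ℕ) : ℚ) + Y * ((K 1 : ℚ) + X)) /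
        ((∑ k ∈ Ico 1 2, K k : ℕ) : ℚ)
    unfold krSum
    rw [show (2 : ℕ) - 1 = 1 from rfl, show (2 : ℕ) - 2 = 0 from rfl,
      show (range 1).powerset = {∅, ({0} : Finset ℕ)} from rfl]
    rw [show ({∅, {0}} : Finset (Finset ℕ)) = insert ∅ {{0}} from rfl,
      sum_insert (by decide), sum_singleton]
    rw [prod_insert (show (1 : ℕ) ∉ (∅ : Finset ℕ) by simp), prod_empty,
      prod_insert (show (1 : ℕ) ∉ ({0} : Finset ℕ) by simp), prod_singleton,
      prod_empty, prod_singleton]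
    rw [show blockStart ∅ 1 = 0 from rfl, show blockStart {0} 1 = 1 from rfl,
      show blockStart {0} 0 = 0 from rfl]
    rw [if_pos rfl, if_pos rfl, if_neg (by omega : ¬ (0 : ℕ) = 1), if_pos rfl]
    rw [card_empty, card_singleton]
    rw [show Ico 0 2 = ({0, 1} : Finset ℕ) from rfl, show Ico 1 2 = ({1} : Finset ℕ) from rfl,
      show Ico 0 1 = ({0} : Finset ℕ) from rfl, show range 1 = ({0} : Finset ℕ) from rfl]
    simp only [sum_insert (show (0 : ℕ) ∉ ({1} : Finset ℕ) by decide), sum_singleton]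
    push_cast
    field_simp
    ring
  | succ n ih =>
    intro K hK X Y
    show krSum (n + 3) K X Y =
      -(X * ((∑ k ∈ range (n + 2), K k : ℕ) : ℚ) + Y * ((K (n + 2) : ℚ) + X)) /
        ((∑ k ∈ Ico 1 (n + 3), K k : ℕ) : ℚ)
    have hK' : ∀ j < n + 2, 1 ≤ mergeK K (n + 1) j := by
      intro j hj
      by_cases h : j = n + 1
      · subst h
        rw [mergeK_self]
        have := hK (n + 1) (by omega)
        omega
      · rw [mergeK_lt h]
        exact hK j (by omega)
    rw [krSum_step, ih _ hK', ih _ hK']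
    rw [mergeK_sum_range (le_refl (n + 1)), mergeK_sum_Ico_top (by omega : 1 ≤ n + 1),
      mergeK_self, sum_range_succ K (n + 1)]
    have d1 : ((K (n + 2) : ℕ) : ℚ) ≠ 0 := by
      have : (0 : ℚ) < K (n + 2) := by exact_mod_cast hK (n + 2) (by omega)
      exact this.ne'
    have d2 : (((∑ k ∈ range (n + 1), K k) + K (n + 1) : ℕ) : ℚ) ≠ 0 := by
      have : 0 < (∑ k ∈ range (n + 1), K k) + K (n + 1) := by
        have := hK (n + 1) (by omega); omega
      exact_mod_cast this.ne'
    have d3 : ((∑ k ∈ Ico 1 (n + 3), K k : ℕ) : ℚ) ≠ 0 := by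
      exact_mod_cast (sumK_pos hK (by omega : 1 < n + 3) (le_refl _)).ne'
    push_cast at d1 d2 d3 ⊢
    field_simp
    ring

/-- Krattenthaler's lemma: for `s > 1`, positive integers `K_1, …, K_s`
(0-indexed here as `K 0, …, K (s-1)`) and rationals `X`, `Y`,
the alternating sum over all subsets `A` of the cut positions `{0, …, s-2}` of the
block products equals `-(X(K_1+⋯+K_{s-1}) + Y(K_s+X))/(K_2+⋯+K_s)`. -/
theorem krattenthaler_lemma (s : ℕ) (hs : 1 < s) (K : ℕ → ℕ) (hK : ∀ j < s, 1 ≤ K j)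
    (X Y : ℚ) :
    (∑ A ∈ (Finset.range (s - 1)).powerset,
      (-1 : ℚ) ^ A.card *
        (∏ e ∈ insert (s - 1) A,
          (if e = s - 1 then ((∑ k ∈ Finset.Ico (blockStart A e) s, K k : ℕ) : ℚ) + X
            else ((∑ k ∈ Finset.Ico (blockStart A e) (e + 1), K k : ℕ) : ℚ))) *
        (∏ a ∈ A,
          (((K a + K (a + 1) : ℕ) : ℚ) + (if a = s - 2 then Y else 0)) /
            (((∑ k ∈ Finset.range (a + 1), K k : ℕ) : ℚ) *
              ((∑ k ∈ Finset.Ico (a + 1) s, K k : ℕ) : ℚ))))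
    = -(X * ((∑ k ∈ Finset.range (s - 1), K k : ℕ) : ℚ) + Y * (((K (s - 1) : ℕ) : ℚ) + X)) /
        ((∑ k ∈ Finset.Ico 1 s, K k : ℕ) : ℚ) := by
  obtain ⟨n, rfl⟩ : ∃ n, s = n + 2 := ⟨s - 2, by omega⟩
  have h := krSum_formula n K (fun j hj => hK j hj) X Y
  unfold krSum at h
  simpa only [show n + 2 - 1 = n + 1 from rfl, show n + 2 - 2 = n from rfl] using h
end

section
/- For any composition I = (I_1, ..., I_r) of N with r ≥ 1, the identity (I_2+···+I_r)(I_1+I_2) + (I_3+···+I_r)(I_2+I_3) + ··· + I_r(I_{r-1}+I_r) = (I_1+···+I_r)(I_2+···+I_r) holds; consequently, with m_I as defined by m_I = -(-1)^r N!(N-1)! ∏_j 1/(I_j!(I_j-1)!) · ∏_{j=1}^{r-1} 1/(I_j+I_{j+1}), one has -(N-I_1) m_I = ∑_{k=1}^{r-1} C(N-1, I_1+···+I_k)² (I_1+···+I_k) · m_{(I_1,...,I_k)} · m_{(I_{k+1},...,I_r)}. -/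
open Finset

/-- The coefficient `m_I` associated to a composition `I`. -/
def mC (r : ℕ) (I : ℕ → ℕ) : ℚ :=
  -(-1 : ℚ) ^ r * ((∑ j ∈ Finset.range r, I j).factorial : ℚ) *
      (((∑ j ∈ Finset.range r, I j) - 1).factorial : ℚ) *
    (∏ j ∈ Finset.range r, (1 / (((I j).factorial * (I j - 1).factorial : ℕ) : ℚ))) *
    ∏ j ∈ Finset.range (r - 1), (1 / ((I j + I (j + 1) : ℕ) : ℚ))

theorem psqr_part1 (m : ℕ) (I : ℕ → ℕ) :
    ∑ k ∈ range m, (∑ i ∈ Ico (k+1) (m+1), I i) * (I k + I (k+1))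
      = (∑ i ∈ range (m+1), I i) * (∑ i ∈ Ico 1 (m+1), I i) := by
  induction m with
  | zero => simp
  | succ m ih =>
    have step : ∀ k ∈ range m, (∑ i ∈ Ico (k+1) (m+1+1), I i) * (I k + I (k+1))
        = (∑ i ∈ Ico (k+1) (m+1), I i) * (I k + I (k+1)) + I (m+1) * (I k + I (k+1)) := by
      intro k hk
      have hk' := Finset.mem_range.mp hk
      rw [Finset.sum_Ico_succ_top (by omega : k+1 ≤ m+1)]
      ring
    rw [Finset.sum_range_succ, Finset.sum_congr rfl step, Finset.sum_add_distrib, ih,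
        ← Finset.mul_sum]
    have hshift : ∑ k ∈ range m, (I k + I (k+1))
        = (∑ i ∈ range m, I i) + ∑ i ∈ Ico 1 (m+1), I i := by
      rw [Finset.sum_add_distrib]
      congr 1
      rw [Finset.sum_Ico_eq_sum_range]
      simp [add_comm]
    rw [hshift]
    rw [Finset.sum_Ico_succ_top (by omega : (m:ℕ)+1 ≤ m+1),
        Finset.sum_Ico_succ_top (by omega : (1:ℕ) ≤ m+1),
        Finset.sum_range_succ (n := m+1), Finset.sum_range_succ (n := m)]
    simp
    ring

theorem psqr_key_nat (A B N : ℕ) (hA : 0 < A) (hB : 0 < B) (hN : N = A + B) :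
    (N-1).choose A ^ 2 * A * A.factorial * (A-1).factorial * B.factorial * (B-1).factorial * N
      = B * N.factorial * (N-1).factorial := by
  have hN0 : 0 < N := by omega
  have hAle : A ≤ N - 1 := by omega
  have hsub : N - 1 - A = B - 1 := by omega
  have hc := Nat.choose_mul_factorial_mul_factorial hAle
  rw [hsub] at hc
  have h1 : A * (A-1).factorial = A.factorial := Nat.mul_factorial_pred hA.ne'
  have h2 : B * (B-1).factorial = B.factorial := Nat.mul_factorial_pred hB.ne'
  have h3 : N * (N-1).factorial = N.factorial := Nat.mul_factorial_pred hN0.ne'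
  calc (N-1).choose A ^ 2 * A * A.factorial * (A-1).factorial * B.factorial * (B-1).factorial * N
      = ((N-1).choose A * A.factorial * (B-1).factorial) *
        ((N-1).choose A * (A * (A-1).factorial) * (B-1).factorial) * (B * N) := by
        rw [← h2]; ring
    _ = (N-1).factorial * (N-1).factorial * (B * N) := by rw [h1, hc]
    _ = B * N.factorial * (N-1).factorial := by rw [← h3]; ring

theorem psqr_term_eq (r N k : ℕ) (hk : k + 1 < r) (I : ℕ → ℕ) (hI : ∀ i < r, 1 ≤ I i)
    (hN : N = ∑ i ∈ range r, I i) :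
    ((N - 1).choose (∑ i ∈ range (k + 1), I i) : ℚ) ^ 2 *
        ((∑ i ∈ range (k + 1), I i : ℕ) : ℚ) *
        mC (k + 1) I * mC (r - (k + 1)) (fun i => I (i + (k + 1)))
    = -(((∑ i ∈ Ico (k + 1) r, I i) * (I k + I (k + 1)) : ℕ) : ℚ) / N * mC r I := by
  obtain ⟨q, rfl⟩ : ∃ q, r = k + 1 + q := ⟨r - (k+1), by omega⟩
  have hq : 1 ≤ q := by omega
  have hq' : k + 1 + q - (k+1) = q := by omega
  rw [hq']
  have hA1 : 1 ≤ ∑ i ∈ range (k + 1), I i := le_trans (hI 0 (by omega))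
    (Finset.single_le_sum (f := I) (fun i _ => Nat.zero_le _) (Finset.mem_range.mpr (by omega)))
  have hB1 : 1 ≤ ∑ i ∈ range q, I (i + (k + 1)) := le_trans (hI (0 + (k+1)) (by omega))
    (Finset.single_le_sum (f := fun i => I (i + (k+1))) (fun i _ => Nat.zero_le _)
      (Finset.mem_range.mpr (by omega)))
  have hAB : N = (∑ i ∈ range (k + 1), I i) + ∑ i ∈ range q, I (i + (k + 1)) := by
    rw [hN, Finset.sum_range_add]
    congr 1
    exact Finset.sum_congr rfl (fun j _ => by rw [add_comm])
  have hIco : ∑ i ∈ Ico (k + 1) (k + 1 + q), I i = ∑ i ∈ range q, I (i + (k + 1)) := by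
    rw [Finset.sum_Ico_eq_sum_range, hq']
    exact Finset.sum_congr rfl (fun j _ => by rw [add_comm])
  have hP : ∏ j ∈ range (k+1+q), (1 / (((I j).factorial * (I j - 1).factorial : ℕ):ℚ))
      = (∏ j ∈ range (k+1), (1 / (((I j).factorial * (I j - 1).factorial : ℕ):ℚ))) *
        ∏ j ∈ range q, (1 / (((I (j+(k+1))).factorial * (I (j+(k+1)) - 1).factorial : ℕ):ℚ)) := by
    rw [Finset.prod_range_add]
    exact congrArg _ (Finset.prod_congr rfl fun j _ => by rw [add_comm])
  have hM : ∏ j ∈ range (k+1+q-1), (1/((I j + I (j+1):ℕ):ℚ))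
      = ((∏ j ∈ range k, (1/((I j + I (j+1):ℕ):ℚ))) * (1/((I k + I (k+1):ℕ):ℚ))) *
        ∏ j ∈ range (q-1), (1/((I (j+(k+1)) + I (j+1+(k+1)):ℕ):ℚ)) := by
    have e : k+1+q-1 = (k+1)+(q-1) := by omega
    rw [e, Finset.prod_range_add, Finset.prod_range_succ]
    congr 1
    refine Finset.prod_congr rfl fun j _ => ?_
    have e1 : k+1+j = j+(k+1) := by omega
    have e2 : j+(k+1)+1 = j+1+(k+1) := by omega
    rw [e1, e2]
  simp only [mC, Nat.add_sub_cancel, ← hN, hIco, hP, hM]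
  set P1 := ∏ j ∈ range (k+1), (1 / (((I j).factorial * (I j - 1).factorial : ℕ):ℚ)) with hP1
  set P2 := ∏ j ∈ range q, (1 / (((I (j+(k+1))).factorial * (I (j+(k+1)) - 1).factorial : ℕ):ℚ)) with hP2
  set M1 := ∏ j ∈ range k, (1/((I j + I (j+1):ℕ):ℚ)) with hM1
  set M2 := ∏ j ∈ range (q-1), (1/((I (j+(k+1)) + I (j+1+(k+1)):ℕ):ℚ)) with hM2
  have hcn : (I k + I (k+1)) ≠ 0 := by have := hI k (by omega); omega
  have hc : ((I k : ℚ) + (I (k+1) : ℚ)) ≠ 0 := by exact_mod_cast hcn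
  have hc1 : ((I k : ℚ) + (I (k+1))) * (1 / ((I k : ℚ) + I (k+1))) = 1 := mul_one_div_cancel hc
  have hNne : (N:ℚ) ≠ 0 := Nat.cast_ne_zero.mpr (by omega)
  have keyQ := congrArg (Nat.cast (R := ℚ)) (psqr_key_nat _ _ _ hA1 hB1 hAB)
  push_cast at keyQ ⊢
  rw [div_mul_eq_mul_div, eq_div_iff hNne]
  linear_combination ((-1:ℚ)^(k+1+q) * P1*P2*M1*M2) * keyQ -
    ((∑ i ∈ range q, (I (i+(k+1)) : ℚ)) * (N.factorial : ℚ) * ((N-1).factorial : ℚ) *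
      P1*P2*M1*M2 * (-1:ℚ)^(k+1+q)) * hc1

/-- the partial-sum identity and the resulting quadratic relation
(comb-first) among the coefficients `m_I`. -/
theorem partial_sum_and_quadratic_relation (r N : ℕ) (hr : 1 ≤ r) (I : ℕ → ℕ)
    (hI : ∀ i < r, 1 ≤ I i) (hN : N = ∑ i ∈ Finset.range r, I i) :
    ((∑ k ∈ Finset.range (r - 1), (∑ i ∈ Finset.Ico (k + 1) r, I i) * (I k + I (k + 1)))
        = (∑ i ∈ Finset.range r, I i) * (∑ i ∈ Finset.Ico 1 r, I i)) ∧
    (-((N : ℚ) - (I 0 : ℚ)) * mC r I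
        = ∑ k ∈ Finset.range (r - 1),
            (((N - 1).choose (∑ i ∈ Finset.range (k + 1), I i) : ℚ)) ^ 2 *
              ((∑ i ∈ Finset.range (k + 1), I i : ℕ) : ℚ) *
              mC (k + 1) I * mC (r - (k + 1)) (fun i => I (i + (k + 1)))) := by
  obtain ⟨m, rfl⟩ : ∃ m, r = m + 1 := ⟨r - 1, by omega⟩
  simp only [Nat.add_sub_cancel]
  refine ⟨psqr_part1 m I, ?_⟩
  have hNT : N = I 0 + ∑ i ∈ Ico 1 (m+1), I i := by
    rw [hN, Finset.range_eq_Ico, Finset.sum_eq_sum_Ico_succ_bot (by omega)]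
  have hI0 := hI 0 (by omega)
  have hNne : (N:ℚ) ≠ 0 := Nat.cast_ne_zero.mpr (by omega)
  rw [Finset.sum_congr rfl (fun k hk => psqr_term_eq (m+1) N k
    (by have := Finset.mem_range.mp hk; omega) I hI hN)]
  rw [← Finset.sum_mul]
  have hsum : ∑ k ∈ range m,
      (-(((∑ i ∈ Ico (k + 1) (m+1), I i) * (I k + I (k + 1)) : ℕ) : ℚ) / N)
      = -((N * (∑ i ∈ Ico 1 (m+1), I i) : ℕ) : ℚ) / N := by
    rw [← Finset.sum_div]
    congr 1
    rw [Finset.sum_neg_distrib]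
    congr 1
    exact_mod_cast congrArg (Nat.cast (R := ℚ)) ((psqr_part1 m I).trans (by rw [← hN]))
  rw [hsum]
  have hcast : (N:ℚ) = (I 0 : ℚ) + ((∑ i ∈ Ico 1 (m+1), I i : ℕ) : ℚ) := by
    exact_mod_cast hNT
  push_cast at hcast ⊢
  field_simp
  linear_combination (-mC (m+1) I) * hcast
end

section
/- Let P be a trace-class symmetric endomorphism (or an n×n symmetric matrix) and define w(r) = det(1 - (r²/2)P)^{1/2} as a formal power series in r. Then -( w''(r) - (n-1) r^{-1} w'(r) )/w(r), expanded as a power series in r²/2, equals -(1/2) ∑_{N ≥ 1} ( ∑_{a=1}^{N-1} tr(P^a) tr(P^{N-a}) ) (r²/2)^{N-1} + ∑_{N ≥ 1} ((2N - n)/2) tr(P^N) (r²/2)^{N-1}. In particular, the coefficient of (r²/4)^{N-1}/(N-1)!² is -(N-1)!² 2^{N-1} [ (n/2 - N) tr(P^N) + (1/2) ∑_{a=1}^{N-1} tr(P^a) tr(P^{N-a}) ]. -/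
open Finset

/-- Formal derivative `d/dr` of a power series. -/
noncomputable def dX (f : PowerSeries ℚ) : PowerSeries ℚ :=
  PowerSeries.mk fun n => ((n : ℚ) + 1) * (PowerSeries.coeff (R := ℚ) (n + 1)) f

/-- The power series
`-(1/2)∑_{N≥1}(∑_{a=1}^{N-1} tr(Pᵃ)tr(P^{N-a}))(r²/2)^{N-1} + ∑_{N≥1}((2N-n)/2)tr(Pᴺ)(r²/2)^{N-1}`. -/
noncomputable def Sser (n : ℕ) (P : Matrix (Fin n) (Fin n) ℚ) : PowerSeries ℚ :=
  PowerSeries.mk fun k =>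
    if k % 2 = 0 then
      (1 / 2 : ℚ) ^ (k / 2) *
        (-(1 / 2) * (∑ a ∈ Finset.Icc 1 (k / 2),
            Matrix.trace (P ^ a) * Matrix.trace (P ^ (k / 2 + 1 - a)))
          + ((2 * ((k / 2 : ℕ) : ℚ) + 2 - (n : ℚ)) / 2) * Matrix.trace (P ^ (k / 2 + 1)))
    else 0

section Helpers

open PowerSeries

lemma dX_eq (f : PowerSeries ℚ) : dX f = PowerSeries.derivative ℚ f := by
  ext n
  simp [dX, PowerSeries.coeff_derivative]
  ring

noncomputable def Tser (n : ℕ) (P : Matrix (Fin n) (Fin n) ℚ) : PowerSeries ℚ :=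
  PowerSeries.mk fun m => if m % 2 = 0 then (1/2 : ℚ)^(m/2) * Matrix.trace (P^(m/2+1)) else 0

noncomputable def Qmat (n : ℕ) (P : Matrix (Fin n) (Fin n) ℚ) :
    Matrix (Fin n) (Fin n) (PowerSeries ℚ) :=
  Matrix.of fun i j => PowerSeries.mk fun m =>
    if m % 2 = 0 then (1/2 : ℚ)^(m/2) * ((P^(m/2)) i j) else 0

noncomputable def Mmat (n : ℕ) (P : Matrix (Fin n) (Fin n) ℚ) :
    Matrix (Fin n) (Fin n) (PowerSeries ℚ) :=
  (1 : Matrix (Fin n) (Fin n) (PowerSeries ℚ)) -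
    (PowerSeries.C (R := ℚ) (1/2) * PowerSeries.X ^ 2) • P.map (PowerSeries.C (R := ℚ))

lemma coeff_c2 (g : PowerSeries ℚ) (m : ℕ) :
    PowerSeries.coeff (R := ℚ) m (PowerSeries.C (R := ℚ) (1/2) * PowerSeries.X ^ 2 * g)
      = if 2 ≤ m then (1/2 : ℚ) * PowerSeries.coeff (R := ℚ) (m-2) g else 0 := by
  rw [mul_assoc, ← PowerSeries.smul_eq_C_mul, PowerSeries.coeff_smul,
    PowerSeries.coeff_X_pow_mul']
  split_ifs <;> simp

lemma coeff_one_entry {N : Type*} [DecidableEq N] [Fintype N] (i j : N) (m : ℕ) (hm : m ≠ 0) :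
    PowerSeries.coeff (R := ℚ) m ((1 : Matrix N N (PowerSeries ℚ)) i j) = 0 := by
  rcases eq_or_ne i j with rfl | hij
  · rw [Matrix.one_apply_eq, PowerSeries.coeff_one, if_neg hm]
  · rw [Matrix.one_apply_ne hij, map_zero]

variable (n : ℕ) (P : Matrix (Fin n) (Fin n) ℚ)

lemma AQ : (P.map (PowerSeries.C (R := ℚ))) * Qmat n P =
    Matrix.of (fun i j => PowerSeries.mk fun m =>
      if m % 2 = 0 then (1/2 : ℚ)^(m/2) * ((P^(m/2+1)) i j) else 0) := by
  ext i j m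
  simp only [Matrix.mul_apply, Matrix.map_apply, Qmat, Matrix.of_apply, map_sum,
    ← PowerSeries.smul_eq_C_mul, PowerSeries.coeff_smul, PowerSeries.coeff_mk]
  by_cases hm : m % 2 = 0
  · simp only [hm, if_true]
    rw [pow_succ', Matrix.mul_apply, Finset.mul_sum]
    exact Finset.sum_congr rfl fun k _ => by rw [smul_eq_mul]; ring
  · simp [hm]

lemma QA : Qmat n P * (P.map (PowerSeries.C (R := ℚ))) =
    Matrix.of (fun i j => PowerSeries.mk fun m =>
      if m % 2 = 0 then (1/2 : ℚ)^(m/2) * ((P^(m/2+1)) i j) else 0) := by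
  ext i j m
  simp only [Matrix.mul_apply, Matrix.map_apply, Qmat, Matrix.of_apply, map_sum,
    PowerSeries.coeff_mk]
  have hc : ∀ k, PowerSeries.coeff (R := ℚ) m
      ((PowerSeries.mk fun m => if m % 2 = 0 then (1/2 : ℚ)^(m/2) * ((P^(m/2)) i k) else 0)
        * PowerSeries.C (R := ℚ) (P k j))
      = (if m % 2 = 0 then (1/2 : ℚ)^(m/2) * ((P^(m/2)) i k) else 0) * P k j := by
    intro k
    rw [mul_comm, ← PowerSeries.smul_eq_C_mul, PowerSeries.coeff_smul, PowerSeries.coeff_mk,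
      smul_eq_mul, mul_comm]
  simp only [hc]
  by_cases hm : m % 2 = 0
  · simp only [hm, if_true]
    rw [pow_succ, Matrix.mul_apply, Finset.mul_sum]
    exact Finset.sum_congr rfl fun k _ => by ring
  · simp [hm]

lemma MQ : Mmat n P * Qmat n P = 1 := by
  have h : Mmat n P * Qmat n P =
      Qmat n P - (PowerSeries.C (R := ℚ) (1/2) * PowerSeries.X ^ 2) •
        ((P.map (PowerSeries.C (R := ℚ))) * Qmat n P) := by
    rw [Mmat, Matrix.sub_mul, Matrix.one_mul, Matrix.smul_mul]
  rw [h, AQ]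
  ext i j m
  rw [Matrix.sub_apply, map_sub, Matrix.smul_apply, smul_eq_mul, coeff_c2]
  simp only [Qmat, Matrix.of_apply, PowerSeries.coeff_mk]
  rcases Nat.even_or_odd m with ⟨k, rfl⟩ | ⟨k, rfl⟩
  · have h2 : (k + k) % 2 = 0 := by omega
    have h3 : (k + k) / 2 = k := by omega
    rcases Nat.eq_zero_or_pos k with rfl | hk
    · simp [Matrix.one_apply, PowerSeries.coeff_one]
    · have h4 : 2 ≤ k + k := by omega
      have h5 : (k + k - 2) % 2 = 0 := by omega
      have h6 : (k + k - 2) / 2 = k - 1 := by omega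
      have h7 : k - 1 + 1 = k := by omega
      simp only [h2, h3, h4, h5, h6, h7, if_true]
      have h8 : (1/2 : ℚ)^k = 1/2 * (1/2 : ℚ)^(k-1) := by
        conv_lhs => rw [← h7]
        rw [pow_succ']
      have hne : (k+k) ≠ 0 := by omega
      rw [coeff_one_entry i j (k+k) hne, h8]
      ring
  · have h2 : ¬ ((2*k + 1) % 2 = 0) := by omega
    have hne : (2*k+1) ≠ 0 := by omega
    rw [coeff_one_entry i j (2*k+1) hne]
    rcases Nat.eq_zero_or_pos k with rfl | hk
    · norm_num
    · have h4 : ¬ ((2 * k - 1) % 2 = 0) := by omega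
      simp only [h2, if_false, zero_sub, neg_eq_zero]
      simp [h2]
      intro _ h5
      exact absurd h5 h4

lemma QM : Qmat n P * Mmat n P = 1 := by
  have h : Qmat n P * Mmat n P =
      Qmat n P - (PowerSeries.C (R := ℚ) (1/2) * PowerSeries.X ^ 2) •
        ((P.map (PowerSeries.C (R := ℚ))) * Qmat n P) := by
    rw [Mmat, Matrix.mul_sub, Matrix.mul_one, Matrix.mul_smul, QA, ← AQ]
  rw [← MQ n P]
  rw [h]
  have h2 : Mmat n P * Qmat n P =
      Qmat n P - (PowerSeries.C (R := ℚ) (1/2) * PowerSeries.X ^ 2) •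
        ((P.map (PowerSeries.C (R := ℚ))) * Qmat n P) := by
    rw [Mmat, Matrix.sub_mul, Matrix.one_mul, Matrix.smul_mul]
  rw [h2]

lemma adjM : (Mmat n P).adjugate = (Mmat n P).det • Qmat n P := by
  calc (Mmat n P).adjugate = (Qmat n P * Mmat n P) * (Mmat n P).adjugate := by
        rw [QM, Matrix.one_mul]
    _ = Qmat n P * (Mmat n P * (Mmat n P).adjugate) := by rw [Matrix.mul_assoc]
    _ = Qmat n P * ((Mmat n P).det • 1) := by rw [Matrix.mul_adjugate]
    _ = (Mmat n P).det • Qmat n P := by rw [Matrix.mul_smul, Matrix.mul_one]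

lemma traceQA : Matrix.trace (Qmat n P * P.map (PowerSeries.C (R := ℚ))) = Tser n P := by
  rw [QA, Matrix.trace]
  apply PowerSeries.ext; intro m
  rw [map_sum]
  simp only [Matrix.diag_apply, Matrix.of_apply, PowerSeries.coeff_mk, Tser]
  by_cases hm : m % 2 = 0
  · simp only [hm, if_true, Matrix.trace, Matrix.diag_apply, Finset.mul_sum]
  · simp [hm]

lemma deriv_prod {ι : Type*} [DecidableEq ι] (s : Finset ι) (f : ι → PowerSeries ℚ) :
    PowerSeries.derivative ℚ (∏ i ∈ s, f i)
      = ∑ i ∈ s, PowerSeries.derivative ℚ (f i) * ∏ j ∈ s.erase i, f j := by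
  classical
  induction s using Finset.induction_on with
  | empty => simp
  | insert a s ha ih =>
    rw [Finset.prod_insert ha, Derivation.leibniz, ih, Finset.sum_insert ha,
      Finset.erase_insert ha, smul_eq_mul, smul_eq_mul, Finset.mul_sum]
    rw [Finset.sum_congr rfl (fun i hi => ?_), add_comm, mul_comm]
    rw [Finset.erase_insert_of_ne (by rintro rfl; exact ha hi),
      Finset.prod_insert (by simp [ha, Finset.mem_erase])]
    ring

lemma deriv_det {ι : Type*} [DecidableEq ι] [Fintype ι] (M : Matrix ι ι (PowerSeries ℚ)) :
    PowerSeries.derivative ℚ M.det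
      = ∑ j, (M.updateCol j (fun i => PowerSeries.derivative ℚ (M i j))).det := by
  classical
  rw [Matrix.det_apply]
  rw [map_sum]
  have hupd : ∀ j : ι, (M.updateCol j (fun i => PowerSeries.derivative ℚ (M i j))).det
      = ∑ σ : Equiv.Perm ι, Equiv.Perm.sign σ •
          (PowerSeries.derivative ℚ (M (σ j) j) * ∏ i ∈ Finset.univ.erase j, M (σ i) i) := by
    intro j
    rw [Matrix.det_apply]
    apply Finset.sum_congr rfl
    intro σ _
    congr 1
    rw [← Finset.mul_prod_erase Finset.univ _ (Finset.mem_univ j)]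
    congr 1
    · simp [Matrix.updateCol_apply]
    · apply Finset.prod_congr rfl
      intro i hi
      rw [Matrix.updateCol_apply, if_neg (Finset.ne_of_mem_erase hi)]
  simp_rw [hupd]
  rw [Finset.sum_comm]
  apply Finset.sum_congr rfl
  intro σ _
  have : PowerSeries.derivative ℚ (Equiv.Perm.sign σ • ∏ i, M (σ i) i)
      = Equiv.Perm.sign σ • PowerSeries.derivative ℚ (∏ i, M (σ i) i) := by
    obtain h | h := Int.units_eq_one_or (Equiv.Perm.sign σ) <;> simp [h]
  rw [this, deriv_prod, Finset.smul_sum]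

lemma Dc : PowerSeries.derivative ℚ (PowerSeries.C (R := ℚ) (1/2) * PowerSeries.X^2 : PowerSeries ℚ)
    = PowerSeries.X := by
  ext m
  rw [PowerSeries.coeff_derivative, ← PowerSeries.smul_eq_C_mul, PowerSeries.coeff_smul,
    PowerSeries.coeff_X_pow, PowerSeries.coeff_X]
  rcases m with _|_|m
  · norm_num
  · norm_num
  · norm_num
    exact fun h => absurd h (by omega)

lemma derivDet : PowerSeries.derivative ℚ (Mmat n P).det
    = -(PowerSeries.X * (Tser n P * (Mmat n P).det)) := by
  rw [deriv_det]
  have hcol : ∀ j, (fun i => PowerSeries.derivative ℚ (Mmat n P i j))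
      = (-PowerSeries.X : PowerSeries ℚ) • (fun i => (P.map (PowerSeries.C (R := ℚ))) i j) := by
    intro j; funext i
    have h1 : PowerSeries.derivative ℚ ((1 : Matrix (Fin n) (Fin n) (PowerSeries ℚ)) i j)
        = 0 := by
      rcases eq_or_ne i j with rfl | hij
      · rw [Matrix.one_apply_eq]; simp
      · rw [Matrix.one_apply_ne hij]; simp
    simp only [Mmat, Matrix.sub_apply, Matrix.smul_apply, map_sub, h1, smul_eq_mul,
      Matrix.map_apply, Pi.smul_apply]
    rw [Derivation.leibniz, Dc]
    simp only [PowerSeries.derivative_C, smul_zero, zero_add, smul_eq_mul, zero_sub]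
    ring
  rw [Finset.sum_congr rfl fun j _ => by rw [hcol j]]
  rw [Finset.sum_congr rfl fun j _ =>
    Matrix.det_updateCol_smul (Mmat n P) j (-PowerSeries.X) (fun i => (P.map (PowerSeries.C (R := ℚ))) i j)]
  have h2 : ∀ j, ((Mmat n P).updateCol j (fun i => (P.map (PowerSeries.C (R := ℚ))) i j)).det
      = Matrix.mulVec ((Mmat n P).adjugate) (fun i => (P.map (PowerSeries.C (R := ℚ))) i j) j := fun j => by
    rw [← Matrix.cramer_apply, Matrix.cramer_eq_adjugate_mulVec]
  rw [← Finset.mul_sum, Finset.sum_congr rfl fun j _ => h2 j]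
  have h3 : ∑ j, Matrix.mulVec ((Mmat n P).adjugate) (fun i => (P.map (PowerSeries.C (R := ℚ))) i j) j
      = Matrix.trace ((Mmat n P).adjugate * P.map (PowerSeries.C (R := ℚ))) := by
    simp [Matrix.trace, Matrix.mul_apply, Matrix.mulVec, dotProduct, Matrix.diag]
  rw [h3, adjM, Matrix.smul_mul, Matrix.trace_smul, traceQA, smul_eq_mul]
  ring
lemma coeff_C_mul' (m : ℕ) (a : ℚ) (f : PowerSeries ℚ) :
    PowerSeries.coeff (R := ℚ) m (PowerSeries.C (R := ℚ) a * f) = a * PowerSeries.coeff (R := ℚ) m f := by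
  rw [← PowerSeries.smul_eq_C_mul, PowerSeries.coeff_smul, smul_eq_mul]

lemma sum_range_even (g : ℕ → ℚ) (hg : ∀ i, i % 2 = 1 → g i = 0) (k : ℕ) :
    ∑ i ∈ Finset.range (2*k+1), g i = ∑ α ∈ Finset.range (k+1), g (2*α) := by
  induction k with
  | zero => simp
  | succ k ih =>
    rw [show 2*(k+1)+1 = 2*k+1+1+1 from by omega, Finset.sum_range_succ (n := 2*k+1+1),
      Finset.sum_range_succ (n := 2*k+1), ih, hg (2*k+1) (by omega), add_zero,
      Finset.sum_range_succ (n := k+1), show 2*k+1+1 = 2*(k+1) from by omega]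

lemma coeff_TT (n : ℕ) (P : Matrix (Fin n) (Fin n) ℚ) (m : ℕ) :
    PowerSeries.coeff (R := ℚ) m (Tser n P * Tser n P)
      = ∑ i ∈ Finset.range (m+1),
          ((if i % 2 = 0 then (1/2 : ℚ)^(i/2) * Matrix.trace (P^(i/2+1)) else 0) *
           (if (m-i) % 2 = 0 then (1/2 : ℚ)^((m-i)/2) * Matrix.trace (P^((m-i)/2+1)) else 0)) := by
  rw [PowerSeries.coeff_mul, Finset.Nat.sum_antidiagonal_eq_sum_range_succ_mk]
  simp [Tser]

lemma hS (n : ℕ) (P : Matrix (Fin n) (Fin n) ℚ) :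
    PowerSeries.C (R := ℚ) 4 * Sser n P
      = PowerSeries.C (R := ℚ) (4 - 2*(n:ℚ)) * Tser n P
        + PowerSeries.C (R := ℚ) 2 * (PowerSeries.X * PowerSeries.derivative ℚ (Tser n P))
        - PowerSeries.X^2 * (Tser n P * Tser n P) := by
  ext m
  rw [map_sub, map_add, coeff_C_mul', coeff_C_mul', coeff_C_mul',
    PowerSeries.coeff_X_pow_mul']
  rcases Nat.even_or_odd m with ⟨k, rfl⟩ | ⟨k, rfl⟩
  · have h2 : (k + k) % 2 = 0 := by omega
    have h3 : (k + k) / 2 = k := by omega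
    rcases Nat.eq_zero_or_pos k with rfl | hk
    · simp [Sser, Tser]
      ring
    · -- k ≥ 1
      have hm1 : k + k = (k + k - 1) + 1 := by omega
      have hXdT : PowerSeries.coeff (R := ℚ) (k+k) (PowerSeries.X * PowerSeries.derivative ℚ (Tser n P))
          = (1/2 : ℚ)^k * Matrix.trace (P^(k+1)) * (k + k : ℚ) := by
        rw [hm1, PowerSeries.coeff_succ_X_mul, PowerSeries.coeff_derivative]
        rw [← hm1]
        simp only [Tser, PowerSeries.coeff_mk, h2, h3, if_true]
        have : ((k + k - 1 : ℕ) : ℚ) + 1 = (k + k : ℚ) := by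
          have := Nat.cast_sub (by omega : 1 ≤ k + k) (R := ℚ)
          push_cast at this ⊢
          rw [this]; ring
        rw [this]
      have hTT : PowerSeries.coeff (R := ℚ) (k + k - 2) (Tser n P * Tser n P)
          = (1/2 : ℚ)^(k-1) * ∑ α ∈ Finset.range k,
              Matrix.trace (P^(α+1)) * Matrix.trace (P^(k-α)) := by
        rw [coeff_TT]
        have hrange : k + k - 2 + 1 = 2*(k-1) + 1 := by omega
        rw [hrange]
        rw [sum_range_even _ (fun i hi => by
          rw [if_neg (by omega)]
          ring) (k-1)]
        rw [show k - 1 + 1 = k from by omega, Finset.mul_sum]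
        apply Finset.sum_congr rfl
        intro α hα
        have hαk : α ≤ k - 1 := by
          have := Finset.mem_range.mp hα; omega
        have e1 : (2*α) % 2 = 0 := by omega
        have e2 : (2*α) / 2 = α := by omega
        have e3 : (k + k - 2 - 2*α) % 2 = 0 := by omega
        have e4 : (k + k - 2 - 2*α) / 2 = k - 1 - α := by omega
        have e5 : k - 1 - α + 1 = k - α := by omega
        simp only [e1, e2, e3, e4, e5, if_true]
        rw [show (1/2:ℚ)^(k-1) = (1/2:ℚ)^α * (1/2:ℚ)^(k-1-α) from by
          rw [← pow_add]; congr 1; omega]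
        ring
      rw [hXdT, if_pos (by omega : 2 ≤ k + k), hTT]
      simp only [Sser, Tser, PowerSeries.coeff_mk, h2, h3, if_true]
      have hIcc : ∑ a ∈ Finset.Icc 1 k, Matrix.trace (P ^ a) * Matrix.trace (P ^ (k + 1 - a))
          = ∑ α ∈ Finset.range k, Matrix.trace (P^(α+1)) * Matrix.trace (P^(k-α)) := by
        rw [← Finset.Ico_add_one_right_eq_Icc, Finset.sum_Ico_eq_sum_range]
        apply Finset.sum_congr (by rw [show k + 1 - 1 = k from by omega])
        intro α hα
        have hα' := Finset.mem_range.mp hα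
        rw [show 1 + α = α + 1 from by omega, show k + 1 - (α + 1) = k - α from by omega]
      rw [hIcc]
      have hpow : (1/2:ℚ)^k = (1/2:ℚ) * (1/2:ℚ)^(k-1) := by
        rw [← pow_succ', show k - 1 + 1 = k from by omega]
      rw [hpow]
      push_cast
      ring
  · -- odd
    have h2 : ¬ ((2*k+1) % 2 = 0) := by omega
    have hS0 : PowerSeries.coeff (R := ℚ) (2*k+1) (Sser n P) = 0 := by
      simp [Sser, h2]
    have hT0 : PowerSeries.coeff (R := ℚ) (2*k+1) (Tser n P) = 0 := by
      simp [Tser, h2]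
    have hXdT : PowerSeries.coeff (R := ℚ) (2*k+1) (PowerSeries.X * PowerSeries.derivative ℚ (Tser n P))
        = 0 := by
      rw [show 2*k+1 = (2*k)+1 from rfl, PowerSeries.coeff_succ_X_mul,
        PowerSeries.coeff_derivative]
      have : PowerSeries.coeff (R := ℚ) (2*k+1) (Tser n P) = 0 := hT0
      rw [this, zero_mul]
    have hTT : (if 2 ≤ 2*k+1 then PowerSeries.coeff (R := ℚ) (2*k+1-2) (Tser n P * Tser n P) else 0)
        = 0 := by
      split_ifs with h
      · rw [coeff_TT]
        apply Finset.sum_eq_zero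
        intro i hi
        have hi' := Finset.mem_range.mp hi
        rcases Nat.even_or_odd i with ⟨a, ha⟩ | ⟨a, ha⟩
        · rw [if_neg (show ¬ ((2*k+1-2-i) % 2 = 0) from by omega), mul_zero]
        · rw [if_neg (show ¬ (i % 2 = 0) from by omega), zero_mul]
      · rfl
    rw [hS0, hT0, hXdT, hTT]
    ring

end Helpers

/-- for `w(r) = det(1 - (r²/2)P)^{1/2}` (encoded by `w² = det(1-(r²/2)P)`,
`w(0)=1`), the expression `-(w'' - (n-1)r⁻¹w')/w` equals the series `Sser n P`
(stated multiplied through by `w·r`), and in particular the coefficient of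
`(r²/4)^{N-1}/(N-1)!²` equals
`-(N-1)!² 2^{N-1} [(n/2-N) tr(Pᴺ) + (1/2)∑_{a=1}^{N-1} tr(Pᵃ)tr(P^{N-a})]`. -/
theorem trace_zeroth_order_identity (n : ℕ) (P : Matrix (Fin n) (Fin n) ℚ)
    (hP : P.IsSymm) (w : PowerSeries ℚ) (hw0 : PowerSeries.constantCoeff (R := ℚ) w = 1)
    (hw : w ^ 2 = Matrix.det
      ((1 : Matrix (Fin n) (Fin n) (PowerSeries ℚ)) -
        (PowerSeries.C (R := ℚ) (1 / 2) * PowerSeries.X ^ 2) • P.map (PowerSeries.C (R := ℚ)))) :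
    (-(PowerSeries.X * dX (dX w) - PowerSeries.C (R := ℚ) ((n : ℚ) - 1) * dX w)
        = Sser n P * w * PowerSeries.X) ∧
    (∀ N : ℕ, 1 ≤ N →
      (4 : ℚ) ^ (N - 1) * ((N - 1).factorial : ℚ) ^ 2 *
          (PowerSeries.coeff (R := ℚ) (2 * (N - 1))) (Sser n P)
        = -((N - 1).factorial : ℚ) ^ 2 * 2 ^ (N - 1) *
            (((n : ℚ) / 2 - (N : ℚ)) * Matrix.trace (P ^ N) +
              (1 / 2) * ∑ a ∈ Finset.Icc 1 (N - 1),
                Matrix.trace (P ^ a) * Matrix.trace (P ^ (N - a)))) := by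
  constructor
  · -- part 1
    have hwM : w ^ 2 = (Mmat n P).det := hw
    have hdet : PowerSeries.derivative ℚ (w ^ 2)
        = -(PowerSeries.X * (Tser n P * w ^ 2)) := by
      rw [hwM]
      exact derivDet n P
    have hwne : w ≠ 0 := by
      intro h
      rw [h] at hw0
      simp at hw0
    have E1 : (2 : PowerSeries ℚ) * PowerSeries.derivative ℚ w
        = -(PowerSeries.X * (Tser n P * w)) := by
      apply mul_left_cancel₀ hwne
      have h1 : PowerSeries.derivative ℚ (w ^ 2)
          = w * ((2 : PowerSeries ℚ) * PowerSeries.derivative ℚ w) := by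
        rw [pow_two, Derivation.leibniz]
        simp only [smul_eq_mul]
        ring
      calc w * ((2 : PowerSeries ℚ) * PowerSeries.derivative ℚ w)
          = -(PowerSeries.X * (Tser n P * w ^ 2)) := by rw [← h1, hdet]
        _ = w * -(PowerSeries.X * (Tser n P * w)) := by ring
    have E2 : (2 : PowerSeries ℚ) * PowerSeries.derivative ℚ (PowerSeries.derivative ℚ w)
        = -(Tser n P * w + PowerSeries.X * (PowerSeries.derivative ℚ (Tser n P) * w)
            + PowerSeries.X * (Tser n P * PowerSeries.derivative ℚ w)) := by
      have h := congrArg (PowerSeries.derivative ℚ) E1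
      have h2 : PowerSeries.derivative ℚ
            ((2 : PowerSeries ℚ) * PowerSeries.derivative ℚ w)
          = 2 * PowerSeries.derivative ℚ (PowerSeries.derivative ℚ w) := by
        rw [Derivation.leibniz]
        have hd2 : PowerSeries.derivative ℚ (2 : PowerSeries ℚ) = 0 := by
          rw [← map_ofNat (PowerSeries.C (R := ℚ)) 2, PowerSeries.derivative_C]
        rw [hd2]
        simp only [smul_eq_mul, smul_zero]
        ring
      have h3 : PowerSeries.derivative ℚ (-(PowerSeries.X * (Tser n P * w)))
          = -(Tser n P * w + PowerSeries.X * (PowerSeries.derivative ℚ (Tser n P) * w)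
              + PowerSeries.X * (Tser n P * PowerSeries.derivative ℚ w)) := by
        rw [map_neg, Derivation.leibniz, Derivation.leibniz, PowerSeries.derivative_X]
        simp only [smul_eq_mul]
        ring
      rw [h2, h3] at h
      exact h
    have hS4 : (4 : PowerSeries ℚ) * Sser n P
        = (4 - 2 * PowerSeries.C (R := ℚ) (n : ℚ)) * Tser n P
          + 2 * (PowerSeries.X * PowerSeries.derivative ℚ (Tser n P))
          - PowerSeries.X ^ 2 * (Tser n P * Tser n P) := by
      have h := hS n P
      simp only [map_sub, map_mul, map_ofNat] at h
      exact h
    have hC : PowerSeries.C (R := ℚ) ((n : ℚ) - 1) = PowerSeries.C (R := ℚ) (n : ℚ) - 1 := by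
      rw [map_sub, map_one]
    simp only [dX_eq]
    rw [hC]
    have h4 : (4 : PowerSeries ℚ) ≠ 0 := by
      intro h
      have := congrArg (PowerSeries.constantCoeff (R := ℚ)) h
      rw [map_ofNat] at this
      norm_num at this
    apply mul_left_cancel₀ h4
    linear_combination (2 * (PowerSeries.C (R := ℚ) (n : ℚ) - 1)
        + PowerSeries.X ^ 2 * Tser n P) * E1
      + (-2 * PowerSeries.X) * E2 + (-(w * PowerSeries.X)) * hS4
  · -- part 2
    intro N hN
    have e1 : (2 * (N - 1)) % 2 = 0 := by omega
    have e2 : (2 * (N - 1)) / 2 = N - 1 := by omega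
    have e3 : N - 1 + 1 = N := by omega
    simp only [Sser, PowerSeries.coeff_mk, e1, e2, e3, if_true]
    have hcast : ((N - 1 : ℕ) : ℚ) = (N : ℚ) - 1 := by
      push_cast [Nat.cast_sub hN]
      ring
    rw [hcast]
    have hp : (4 : ℚ) ^ (N - 1) * (1 / 2 : ℚ) ^ (N - 1) = 2 ^ (N - 1) := by
      rw [← mul_pow]
      norm_num
    have hsum : ∀ a ∈ Finset.Icc 1 (N - 1), N - 1 + 1 - a = N - a := fun a ha => by omega
    linear_combination (((N - 1).factorial : ℚ) ^ 2 *
      (-(1 / 2) * (∑ a ∈ Finset.Icc 1 (N - 1),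
          Matrix.trace (P ^ a) * Matrix.trace (P ^ (N - a)))
        + ((2 * ((N : ℚ) - 1) + 2 - (n : ℚ)) / 2) * Matrix.trace (P ^ N))) * hp
end

section
/- For all integers N ≥ 1 and half-integer parameter m = n/2 treated as an indeterminate: ∑_{k=0}^{N-1} (2^k (N-1)!/(N-1-k)!)² · (N-k)!(N-k-1)! · C(m, k) · (-1)^k · 2^{-2k} · m(m-1) = -(-1)^N (m - N)(N-1)! N! C(m, N), where C(m,k) denotes the generalized binomial coefficient m(m-1)···(m-k+1)/k!. Equivalently: -∑_{k=0}^{N-1} (C(N-1,k) k!)² m(m-1)(N-k)!(N-k-1)! (-1)^k C(m,k) = (-1)^N (m-N)(N-1)! N! C(m,N). -/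
open Finset

/-- The generalized binomial coefficient `C(m, k) = m(m-1)⋯(m-k+1)/k!` for rational `m`. -/
def gchoose (m : ℚ) (k : ℕ) : ℚ :=
  (∏ i ∈ Finset.range k, (m - i)) / (k.factorial : ℚ)

lemma prod_shift (m : ℚ) (N : ℕ) :
    ∏ i ∈ Finset.range (N+1), (m - i) = m * ∏ i ∈ Finset.range N, (m - 1 - i) := by
  rw [Finset.prod_range_succ']
  simp only [Nat.cast_zero, sub_zero]
  rw [mul_comm]
  congr 1
  apply Finset.prod_congr rfl
  intro i _
  push_cast
  ring

lemma gchoose_pascal (m : ℚ) (N : ℕ) :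
    gchoose m (N+1) = gchoose (m-1) N + gchoose (m-1) (N+1) := by
  unfold gchoose
  rw [prod_shift, Finset.prod_range_succ]
  have h1 : ((N+1).factorial : ℚ) = (N+1) * (N.factorial : ℚ) := by
    rw [Nat.factorial_succ]; push_cast; ring
  have h2 : (N.factorial : ℚ) ≠ 0 := by exact_mod_cast N.factorial_ne_zero
  rw [h1]
  field_simp
  ring

lemma sumA (m : ℚ) (N : ℕ) :
    ∑ k ∈ Finset.range (N+1), (-1:ℚ)^k * gchoose m k = (-1)^N * gchoose (m-1) N := by
  induction N with
  | zero => simp [gchoose]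
  | succ n ih =>
      rw [Finset.sum_range_succ, ih, gchoose_pascal m n]
      ring

lemma sumB (m : ℚ) (N : ℕ) :
    ∑ k ∈ Finset.range (N+1), ((N:ℚ)+1-k) * (-1:ℚ)^k * gchoose m k
      = (-1)^N * gchoose (m-2) N := by
  induction N with
  | zero => simp [gchoose]
  | succ n ih =>
      have key : ∑ k ∈ Finset.range (n+1+1), ((n:ℚ)+1+1-k) * (-1:ℚ)^k * gchoose m k
          = (∑ k ∈ Finset.range (n+1+1), ((n:ℚ)+1-k) * (-1:ℚ)^k * gchoose m k)
            + ∑ k ∈ Finset.range (n+1+1), (-1:ℚ)^k * gchoose m k := by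
        rw [← Finset.sum_add_distrib]
        apply Finset.sum_congr rfl
        intro k _; ring
      have h0 : ∑ k ∈ Finset.range (n+1+1), ((n:ℚ)+1-k) * (-1:ℚ)^k * gchoose m k
          = ∑ k ∈ Finset.range (n+1), ((n:ℚ)+1-k) * (-1:ℚ)^k * gchoose m k := by
        rw [Finset.sum_range_succ]
        have hz : ((n:ℚ)+1-((n+1:ℕ):ℚ)) = 0 := by push_cast; ring
        rw [hz, zero_mul, zero_mul, add_zero]
      push_cast
      rw [key, h0, ih, sumA m (n+1)]
      have hp : gchoose (m-1) (n+1) = gchoose (m-2) n + gchoose (m-2) (n+1) := by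
        have := gchoose_pascal (m-1) n
        rw [sub_sub] at this; norm_num at this; exact this
      rw [hp]
      ring

/-- the polynomial identity in `m = n/2` (sum-round) verifying the
zeroth-order-term recursion for the operators `M_{2N}` on the round sphere. -/
theorem sphere_sum_identity (N : ℕ) (hN : 1 ≤ N) (m : ℚ) :
    ∑ k ∈ Finset.range N,
        ((2 : ℚ) ^ k * ((N - 1).factorial : ℚ) / ((N - 1 - k).factorial : ℚ)) ^ 2 *
          (((N - k).factorial : ℚ) * ((N - k - 1).factorial : ℚ)) *
          gchoose m k * (-1 : ℚ) ^ k * (1 / (2 : ℚ) ^ (2 * k)) * (m * (m - 1))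
      = -(-1 : ℚ) ^ N * (m - N) * ((N - 1).factorial : ℚ) * (N.factorial : ℚ) *
          gchoose m N := by
  obtain ⟨M, rfl⟩ : ∃ M, N = M + 1 := ⟨N - 1, by omega⟩
  have hstep : ∀ k ∈ Finset.range (M+1),
      ((2 : ℚ) ^ k * (((M+1) - 1).factorial : ℚ) / (((M+1) - 1 - k).factorial : ℚ)) ^ 2 *
          ((((M+1) - k).factorial : ℚ) * (((M+1) - k - 1).factorial : ℚ)) *
          gchoose m k * (-1 : ℚ) ^ k * (1 / (2 : ℚ) ^ (2 * k)) * (m * (m - 1))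
      = (M.factorial : ℚ)^2 * (m * (m-1)) * (((M:ℚ)+1-k) * (-1:ℚ)^k * gchoose m k) := by
    intro k hk
    have hk' : k ≤ M := Nat.lt_succ_iff.mp (Finset.mem_range.mp hk)
    have e1 : M + 1 - 1 = M := rfl
    have e2 : M + 1 - 1 - k = M - k := by omega
    have e3 : M + 1 - k - 1 = M - k := by omega
    have e4 : M + 1 - k = (M - k) + 1 := by omega
    rw [e1, e3, e4, Nat.factorial_succ]
    have hc : (((M - k) + 1 : ℕ) : ℚ) = (M:ℚ) + 1 - k := by
      push_cast [Nat.cast_sub hk']; ring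
    have hf : (((M - k).factorial : ℚ)) ≠ 0 := by exact_mod_cast (M-k).factorial_ne_zero
    have h2 : ((2:ℚ))^k ≠ 0 := by positivity
    rw [pow_mul']
    push_cast [Nat.cast_sub hk']
    field_simp
    ring
  rw [Finset.sum_congr rfl hstep, ← Finset.mul_sum, sumB m M]
  simp only [Nat.add_sub_cancel]
  unfold gchoose
  rw [prod_shift m M]
  have hkey : (m-1) * ∏ i ∈ Finset.range M, (m-2-i)
      = (∏ i ∈ Finset.range M, (m-1-i)) * (m-1-M) := by
    have h1 := prod_shift (m-1) M
    have h2 := Finset.prod_range_succ (fun i => m - 1 - (i:ℚ)) M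
    rw [h2] at h1
    have : ∀ i ∈ Finset.range M, (m - 1 - 1 - (i:ℚ)) = m - 2 - i := by
      intro i _; ring
    rw [Finset.prod_congr rfl this] at h1
    linarith [h1]
  have hM : (M.factorial : ℚ) ≠ 0 := by exact_mod_cast M.factorial_ne_zero
  have hM1 : ((M+1).factorial : ℚ) ≠ 0 := by exact_mod_cast (M+1).factorial_ne_zero
  push_cast
  field_simp
  linear_combination (m * (-1:ℚ)^M) * hkey
end
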